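/- arXiv:1308.0631 — 5 statements merged into one kernel-verified Lean document; each statement's English description precedes it below -/
import Mathlib

section
/- Let τ₁ and τ₂ be the integer matrices τ₁ = [[0,−1],[1,−1]] and τ₂ = [[−1,1],[0,1]], both of which lie in GL₂(ℤ). The subgroup of GL₂(ℤ) generated by {τ₁, τ₂} is isomorphic to the dihedral group of order 6. -/
private def dmap (a b : GL (Fin 2) ℤ) : DihedralGroup 3 → GL (Fin 2) ℤ
  | .r i => a ^ i.val
  | .sr i => b * a ^ i.val

private theorem dmap_mul (a b : GL (Fin 2) ℤ) (ha : a ^ 3 = 1) (hb : b * b = 1)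
    (hc : a * b = b * a ^ 2) :
    ∀ x y : DihedralGroup 3, dmap a b (x * y) = dmap a b x * dmap a b y := by
  have hmod : ∀ k, a ^ k = a ^ (k % 3) := by
    intro k
    conv_lhs => rw [← Nat.div_add_mod k 3, pow_add, pow_mul, ha, one_pow, one_mul]
  have hcomm : ∀ k, a ^ k * b = b * a ^ (2 * k) := by
    intro k
    induction k with
    | zero => simp
    | succ n ih =>
      rw [pow_succ, mul_assoc, hc, ← mul_assoc, ih, mul_assoc, ← pow_add]
      ring_nf
  have hval : ∀ i j : ZMod 3, (j - i).val = (2 * i.val + j.val) % 3 := by decide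
  rintro (i | i) (j | j) <;>
    simp only [dmap, DihedralGroup.r_mul_r, DihedralGroup.r_mul_sr,
      DihedralGroup.sr_mul_r, DihedralGroup.sr_mul_sr]
  · rw [← pow_add, hmod (i.val + j.val), ZMod.val_add]
  · rw [← mul_assoc, hcomm, mul_assoc, ← pow_add, hval, ← hmod]
  · rw [mul_assoc, ← pow_add, hmod (i.val + j.val), ZMod.val_add]
  · rw [mul_assoc, ← mul_assoc (a ^ i.val), hcomm, ← mul_assoc, ← mul_assoc, hb, one_mul,
      ← pow_add, hval, ← hmod]

/-- The subgroup of GL₂(ℤ) generated by τ₁ = [[0,−1],[1,−1]] and τ₂ = [[−1,1],[0,1]]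
is isomorphic to the dihedral group of order 6. -/
theorem stmt_0 (τ₁ τ₂ : GL (Fin 2) ℤ)
    (h₁ : (τ₁ : Matrix (Fin 2) (Fin 2) ℤ) = !![0, -1; 1, -1])
    (h₂ : (τ₂ : Matrix (Fin 2) (Fin 2) ℤ) = !![-1, 1; 0, 1]) :
    Nonempty ((Subgroup.closure {τ₁, τ₂} : Subgroup (GL (Fin 2) ℤ)) ≃* DihedralGroup 3) := by
  have ha : τ₁ ^ 3 = 1 := by
    apply Units.ext
    show ((τ₁ ^ 3 : GL (Fin 2) ℤ) : Matrix (Fin 2) (Fin 2) ℤ) = 1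
    rw [Units.val_pow_eq_pow_val, h₁, pow_succ, pow_succ, pow_one]
    norm_num [Matrix.mul_fin_two]
    rw [Matrix.one_fin_two]
  have hb : τ₂ * τ₂ = 1 := by
    apply Units.ext
    show ((τ₂ * τ₂ : GL (Fin 2) ℤ) : Matrix (Fin 2) (Fin 2) ℤ) = 1
    rw [Units.val_mul, h₂]
    norm_num [Matrix.mul_fin_two]
    rw [Matrix.one_fin_two]
  have hc : τ₁ * τ₂ = τ₂ * τ₁ ^ 2 := by
    apply Units.ext
    show ((τ₁ * τ₂ : GL (Fin 2) ℤ) : Matrix (Fin 2) (Fin 2) ℤ) = ((τ₂ * τ₁ ^ 2 : _) : _)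
    rw [Units.val_mul, Units.val_mul, Units.val_pow_eq_pow_val, h₁, h₂, sq]
    norm_num [Matrix.mul_fin_two]
  let f : DihedralGroup 3 →* GL (Fin 2) ℤ :=
    { toFun := dmap τ₁ τ₂
      map_one' := by show dmap τ₁ τ₂ (.r 0) = 1; simp [dmap]
      map_mul' := dmap_mul τ₁ τ₂ ha hb hc }
  have hinj : Function.Injective f := by
    rw [injective_iff_map_eq_one]
    rintro (i | i) hx
    · fin_cases i
      · rfl
      · exfalso
        have := congrArg (fun g : GL (Fin 2) ℤ => (g : Matrix (Fin 2) (Fin 2) ℤ) 0 0) hx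
        simp only [f, dmap, MonoidHom.coe_mk, OneHom.coe_mk] at this
        simp only [ZMod.val, Fin.val_mk, pow_one] at this
        simp [h₁] at this
      · exfalso
        have := congrArg (fun g : GL (Fin 2) ℤ => (g : Matrix (Fin 2) (Fin 2) ℤ) 0 0) hx
        simp only [f, dmap, MonoidHom.coe_mk, OneHom.coe_mk] at this
        simp only [ZMod.val, Fin.val_mk] at this
        simp only [sq, Units.val_mul, Units.val_one, h₁] at this
        norm_num [Matrix.mul_fin_two, Matrix.one_fin_two] at this
    · exfalso
      have hdet := congrArg (fun g : GL (Fin 2) ℤ => ((g : Matrix (Fin 2) (Fin 2) ℤ)).det) hx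
      simp only [f, dmap, MonoidHom.coe_mk, OneHom.coe_mk, Units.val_mul,
        Units.val_pow_eq_pow_val, Matrix.det_mul, Matrix.det_pow, h₁, h₂] at hdet
      norm_num [Matrix.det_fin_two_of] at hdet
  have hτ₁ : f (.r 1) = τ₁ := by
    show dmap τ₁ τ₂ (.r 1) = τ₁
    simp [dmap, show ((1 : ZMod 3)).val = 1 from rfl]
  have hτ₂ : f (.sr 0) = τ₂ := by
    show dmap τ₁ τ₂ (.sr 0) = τ₂
    simp [dmap, show ((0 : ZMod 3)).val = 0 from rfl]
  have hrange : f.range = Subgroup.closure {τ₁, τ₂} := by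
    apply le_antisymm
    · rintro x ⟨y, rfl⟩
      have m1 : τ₁ ∈ Subgroup.closure {τ₁, τ₂} := Subgroup.subset_closure (by simp)
      have m2 : τ₂ ∈ Subgroup.closure {τ₁, τ₂} := Subgroup.subset_closure (by simp)
      rcases y with i | i
      · exact Subgroup.pow_mem _ m1 _
      · exact Subgroup.mul_mem _ m2 (Subgroup.pow_mem _ m1 _)
    · rw [Subgroup.closure_le]
      rintro x (rfl | rfl)
      · exact ⟨.r 1, hτ₁⟩
      · exact ⟨.sr 0, hτ₂⟩
  exact ⟨((MonoidHom.ofInjective hinj).trans (MulEquiv.subgroupCongr hrange)).symm⟩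
end

section
/- Let F be a field and let α₁, …, α₆ be nonzero elements of F. Then the following are equivalent: (i) for every permutation σ of {1,…,6} one has α_{σ(1)}α_{σ(2)}α_{σ(3)} = α_{σ(4)}α_{σ(5)}α_{σ(6)}; (ii) (α_i·α₁⁻¹)² = 1 for every i = 1,…,6 and ∏_{i=1}^{6} (α_i·α₁⁻¹) = 1. -/
/-- For nonzero α₁,…,α₆ in a field F, the condition
α_{σ(1)}α_{σ(2)}α_{σ(3)} = α_{σ(4)}α_{σ(5)}α_{σ(6)} for all permutations σ is
equivalent to: (α_i/α₁)² = 1 for all i and ∏ᵢ (α_i/α₁) = 1. -/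
theorem stmt_6 (F : Type*) [Field F] (α : Fin 6 → F) (hα : ∀ i, α i ≠ 0) :
    (∀ σ : Equiv.Perm (Fin 6),
      α (σ 0) * α (σ 1) * α (σ 2) = α (σ 3) * α (σ 4) * α (σ 5))
    ↔ ((∀ i, (α i * (α 0)⁻¹) ^ 2 = 1) ∧ ∏ i, (α i * (α 0)⁻¹) = 1) := by
  have h0 : α 0 ≠ 0 := hα 0
  constructor
  · intro h
    have h1 : α 0 * α 1 * α 2 = α 3 * α 4 * α 5 := h 1
    have h2 : α 3 * α 1 * α 2 = α 0 * α 4 * α 5 := h (Equiv.swap 0 3)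
    have h3 : α 0 * α 3 * α 2 = α 1 * α 4 * α 5 := h (Equiv.swap 1 3)
    have h4 : α 0 * α 1 * α 3 = α 2 * α 4 * α 5 := h (Equiv.swap 2 3)
    have h5 : α 4 * α 1 * α 2 = α 3 * α 0 * α 5 := h (Equiv.swap 0 4)
    have h6 : α 5 * α 1 * α 2 = α 3 * α 4 * α 0 := h (Equiv.swap 0 5)
    have ne45 : α 4 * α 5 ≠ 0 := mul_ne_zero (hα 4) (hα 5)
    have ne12 : α 1 * α 2 ≠ 0 := mul_ne_zero (hα 1) (hα 2)
    have e3 : α 3 ^ 2 = α 0 ^ 2 := by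
      apply mul_right_cancel₀ ne45
      linear_combination (α 0) * h2 - (α 3) * h1
    have e1 : α 1 ^ 2 = α 0 ^ 2 := by
      apply mul_right_cancel₀ ne45
      linear_combination (α 3) * h1 - (α 1) * h3 + (α 4 * α 5) * e3
    have e2 : α 2 ^ 2 = α 0 ^ 2 := by
      apply mul_right_cancel₀ ne45
      linear_combination (α 3) * h1 - (α 2) * h4 + (α 4 * α 5) * e3
    have e4 : α 4 ^ 2 = α 0 ^ 2 := by
      apply mul_right_cancel₀ ne12
      linear_combination (α 4) * h5 - (α 0) * h1
    have e5 : α 5 ^ 2 = α 0 ^ 2 := by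
      apply mul_right_cancel₀ ne12
      linear_combination (α 5) * h6 - (α 0) * h1
    constructor
    · intro i
      rw [mul_pow, inv_pow, mul_inv_eq_one₀ (pow_ne_zero 2 h0)]
      fin_cases i
      · rfl
      · exact e1
      · exact e2
      · exact e3
      · exact e4
      · exact e5
    · have key : α 0 * α 1 * α 2 * α 3 * α 4 * α 5 = α 0 ^ 6 := by
        linear_combination (-(α 0 * α 1 * α 2)) * h1 + (α 0 ^ 2 * α 2 ^ 2) * e1 +
          (α 0 ^ 4) * e2
      rw [Fin.prod_univ_six]
      have expand : α 0 * (α 0)⁻¹ * (α 1 * (α 0)⁻¹) * (α 2 * (α 0)⁻¹) *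
          (α 3 * (α 0)⁻¹) * (α 4 * (α 0)⁻¹) * (α 5 * (α 0)⁻¹) =
          (α 0 * α 1 * α 2 * α 3 * α 4 * α 5) * ((α 0)⁻¹) ^ 6 := by ring
      rw [expand, key, inv_pow, mul_inv_cancel₀ (pow_ne_zero 6 h0)]
  · rintro ⟨hsq, hprod⟩ σ
    have hε : ∀ j : Fin 6, α j = (α j * (α 0)⁻¹) * α 0 := fun j =>
      (inv_mul_cancel_right₀ h0 (α j)).symm
    have hp : α (σ 0) * (α 0)⁻¹ * (α (σ 1) * (α 0)⁻¹) * (α (σ 2) * (α 0)⁻¹) *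
        (α (σ 3) * (α 0)⁻¹) * (α (σ 4) * (α 0)⁻¹) * (α (σ 5) * (α 0)⁻¹) = 1 := by
      have := Equiv.prod_comp σ (fun i => α i * (α 0)⁻¹)
      rw [hprod, Fin.prod_univ_six] at this
      exact this
    rw [hε (σ 0), hε (σ 1), hε (σ 2), hε (σ 3), hε (σ 4), hε (σ 5)]
    set a := α (σ 0) * (α 0)⁻¹ with ha
    set b := α (σ 1) * (α 0)⁻¹ with hb
    set c := α (σ 2) * (α 0)⁻¹ with hc
    set d := α (σ 3) * (α 0)⁻¹ with hd
    set e := α (σ 4) * (α 0)⁻¹ with he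
    set f := α (σ 5) * (α 0)⁻¹ with hf
    have hsa := hsq (σ 0)
    have hsb := hsq (σ 1)
    have hsc := hsq (σ 2)
    rw [← ha] at hsa
    rw [← hb] at hsb
    rw [← hc] at hsc
    linear_combination (α 0)^3 * ( -(a*b*c) * hp + (d*e*f)*(b^2*c^2) * hsa +
      (d*e*f)*c^2 * hsb + (d*e*f) * hsc )
end

section
/- Let C be the 4×4 matrix over ℤ/2ℤ with all diagonal entries 0 and all off-diagonal entries 1, and let SP₄(ℤ₂) = {A ∈ M₄(ℤ/2ℤ) : A·C·Aᵗ = C}. Define κ₀ : (ℤ/2ℤ)⁴ → ℤ/2ℤ by κ₀(v) = 1 if v has at least three nonzero entries and κ₀(v) = 0 otherwise, and for A ∈ SP₄(ℤ₂) let κ(A) ∈ (ℤ/2ℤ)⁴ be the column vector whose i-th entry is κ₀ of the i-th row of A. Then for all A, B ∈ SP₄(ℤ₂) one has κ(A·B) = A·κ(B) + κ(A). -/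
open Matrix

/-- The 4×4 matrix over ℤ/2ℤ with zero diagonal and all off-diagonal entries 1. -/
def spForm : Matrix (Fin 4) (Fin 4) (ZMod 2) :=
  Matrix.of fun i j => if i = j then 0 else 1

/-- κ₀(v) = 1 if v has at least three nonzero entries, 0 otherwise. -/
def kappa0 (v : Fin 4 → ZMod 2) : ZMod 2 :=
  if 3 ≤ (Finset.univ.filter fun i => v i ≠ 0).card then 1 else 0

/-- κ(A) is the vector whose i-th entry is κ₀ of the i-th row of A. -/
def kappa (A : Matrix (Fin 4) (Fin 4) (ZMod 2)) : Fin 4 → ZMod 2 :=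
  fun i => kappa0 (A i)

/-- The polarization of κ₀ is expressible via the symplectic form. -/
lemma kappa0_key (u v : Fin 4 → ZMod 2) :
    kappa0 (u + v) = kappa0 u + kappa0 v +
      (if u ≠ 0 ∧ v ≠ 0 ∧ u + v ≠ 0 then u ⬝ᵥ spForm.mulVec v + 1 else 0) := by
  revert u v; decide

lemma spForm_sq : spForm * spForm = 1 := by decide

lemma vecMul_inj {B : Matrix (Fin 4) (Fin 4) (ZMod 2)}
    (hB : B * spForm * Bᵀ = spForm) {u : Fin 4 → ZMod 2}
    (h : u ᵥ* B = 0) : u = 0 := by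
  have hBinv : B * (spForm * Bᵀ * spForm) = 1 := by
    calc B * (spForm * Bᵀ * spForm) = (B * spForm * Bᵀ) * spForm := by
          noncomm_ring
      _ = spForm * spForm := by rw [hB]
      _ = 1 := spForm_sq
  have : u ᵥ* (B * (spForm * Bᵀ * spForm)) = 0 := by
    rw [← Matrix.vecMul_vecMul, h, Matrix.zero_vecMul]
  rwa [hBinv, Matrix.vecMul_one] at this

lemma form_invariant {B : Matrix (Fin 4) (Fin 4) (ZMod 2)}
    (hB : B * spForm * Bᵀ = spForm) (u v : Fin 4 → ZMod 2) :
    (u ᵥ* B) ⬝ᵥ spForm.mulVec (v ᵥ* B) = u ⬝ᵥ spForm.mulVec v := by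
  have h1 : v ᵥ* B = Bᵀ *ᵥ v := (Matrix.mulVec_transpose B v).symm
  rw [h1, Matrix.mulVec_mulVec, Matrix.dotProduct_mulVec, Matrix.vecMul_vecMul,
    ← Matrix.mul_assoc, hB, ← Matrix.dotProduct_mulVec]

/-- The function u ↦ κ₀(uB) + κ₀(u) is additive for symplectic B. -/
lemma hadd {B : Matrix (Fin 4) (Fin 4) (ZMod 2)}
    (hB : B * spForm * Bᵀ = spForm) (u v : Fin 4 → ZMod 2) :
    kappa0 ((u + v) ᵥ* B) + kappa0 (u + v) =
      (kappa0 (u ᵥ* B) + kappa0 u) + (kappa0 (v ᵥ* B) + kappa0 v) := by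
  have hsum : (u + v) ᵥ* B = u ᵥ* B + v ᵥ* B := Matrix.add_vecMul B u v
  have k1 := kappa0_key u v
  have k2 := kappa0_key (u ᵥ* B) (v ᵥ* B)
  have hiff : (u ᵥ* B ≠ 0 ∧ v ᵥ* B ≠ 0 ∧ u ᵥ* B + v ᵥ* B ≠ 0) ↔
      (u ≠ 0 ∧ v ≠ 0 ∧ u + v ≠ 0) := by
    constructor
    · rintro ⟨h1, h2, h3⟩
      refine ⟨fun h => h1 ?_, fun h => h2 ?_, fun h => h3 ?_⟩
      · rw [h, Matrix.zero_vecMul]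
      · rw [h, Matrix.zero_vecMul]
      · rw [← hsum, h, Matrix.zero_vecMul]
    · rintro ⟨h1, h2, h3⟩
      exact ⟨fun h => h1 (vecMul_inj hB h), fun h => h2 (vecMul_inj hB h),
        fun h => h3 (vecMul_inj hB (by rw [hsum]; exact h))⟩
  rw [form_invariant hB u v, if_congr hiff rfl rfl] at k2
  rw [hsum, k2, k1]
  generalize kappa0 (u ᵥ* B) = a
  generalize kappa0 (v ᵥ* B) = b
  generalize kappa0 u = c
  generalize kappa0 v = d
  generalize (if u ≠ 0 ∧ v ≠ 0 ∧ u + v ≠ 0 then u ⬝ᵥ spForm.mulVec v + 1 else 0) = r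
  revert a b c d r; decide

lemma kappa0_zero : kappa0 0 = 0 := by decide

lemma kappa0_single (i : Fin 4) :
    kappa0 (fun j => if i = j then 1 else 0) = 0 := by
  fin_cases i <;> decide

lemma row_formula {B : Matrix (Fin 4) (Fin 4) (ZMod 2)}
    (hB : B * spForm * Bᵀ = spForm) (a : Fin 4 → ZMod 2) :
    kappa0 (a ᵥ* B) = (∑ k, a k * kappa0 (B k)) + kappa0 a := by
  set f : (Fin 4 → ZMod 2) → ZMod 2 := fun u => kappa0 (u ᵥ* B) + kappa0 u with hf
  have f0 : f 0 = 0 := by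
    simp only [hf, Matrix.zero_vecMul, kappa0_zero, add_zero]
  have fadd : ∀ u v, f (u + v) = f u + f v := fun u v => hadd hB u v
  have fsmul : ∀ (c : ZMod 2) (v : Fin 4 → ZMod 2), f (c • v) = c * f v := by
    intro c v
    have : c = 0 ∨ c = 1 := by revert c; decide
    rcases this with h | h <;> subst h <;> simp [f0]
  have fsingle : ∀ i, f (fun j => if i = j then 1 else 0) = kappa0 (B i) := by
    intro i
    have hvm : (fun j => if i = j then 1 else 0) ᵥ* B = B i := by
      ext j
      simp [Matrix.vecMul, dotProduct]
    simp only [hf, hvm, kappa0_single, add_zero]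
  have key : f a = ∑ k, a k * kappa0 (B k) := by
    have ha : a = ∑ i, a i • fun j => if i = j then 1 else 0 := pi_eq_sum_univ a
    calc f a = f (∑ i, a i • fun j => if i = j then 1 else 0) := by rw [← ha]
      _ = ∑ i, f (a i • fun j => if i = j then 1 else 0) := by
          classical
          induction (Finset.univ : Finset (Fin 4)) using Finset.induction_on with
          | empty => simpa using f0
          | insert _ _ h ih =>
              rw [Finset.sum_insert h, Finset.sum_insert h, fadd, ih]
      _ = ∑ i, a i * kappa0 (B i) := by
          refine Finset.sum_congr rfl fun i _ => ?_
          rw [fsmul, fsingle]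
  have : kappa0 (a ᵥ* B) = f a + kappa0 a := by
    simp only [hf]
    generalize kappa0 (a ᵥ* B) = x
    generalize kappa0 a = y
    revert x y; decide
  rw [this, key]

/-- For A, B ∈ SP₄(ℤ₂) (matrices with A·C·Aᵗ = C), κ(A·B) = A·κ(B) + κ(A). -/
theorem stmt_9 (A B : Matrix (Fin 4) (Fin 4) (ZMod 2))
    (hA : A * spForm * Aᵀ = spForm) (hB : B * spForm * Bᵀ = spForm) :
    kappa (A * B) = A.mulVec (kappa B) + kappa A := by
  funext i
  have hrow : (A * B) i = (A i) ᵥ* B := by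
    ext j
    simp [Matrix.mul_apply, Matrix.vecMul, dotProduct]
  simp only [kappa, hrow, Pi.add_apply, Matrix.mulVec, dotProduct]
  exact row_formula hB (A i)
end

section
/- Let F be a field of characteristic different from 2. For 1 ≤ i < j ≤ 6, let f_{ij} be the 6×6 diagonal matrix over F whose (i,i) and (j,j) entries equal −1 and whose other diagonal entries equal 1. Suppose X ∈ GL₆(F) satisfies that X·f_{ij}·X⁻¹ is a diagonal matrix with all diagonal entries in {1, −1} for every 1 ≤ i < j ≤ 6. Then X is a monomial matrix: there exist a permutation σ of {1,…,6} and nonzero scalars a₁,…,a₆ ∈ F such that X = diag(a₁,…,a₆)·P_σ, where P_σ is the permutation matrix with (i, σ(i)) entry equal to 1 for all i and 0 elsewhere. -/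
/-- Over a field of characteristic ≠ 2, if X ∈ GL₆(F) conjugates every f_{ij}
(diagonal with −1 at places i < j and 1 elsewhere) into a ±1-diagonal matrix, then X
is monomial: X = diag(a₁,…,a₆)·P_σ for a permutation σ and nonzero scalars aᵢ. -/
theorem stmt_13 (F : Type*) [Field F] (hF : ringChar F ≠ 2) (X : GL (Fin 6) F)
    (hX : ∀ i j : Fin 6, i < j → ∃ d : Fin 6 → F, (∀ k, d k = 1 ∨ d k = -1) ∧
      (X : Matrix (Fin 6) (Fin 6) F)
          * Matrix.diagonal (fun k => if k = i ∨ k = j then (-1 : F) else 1)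
          * ((X⁻¹ : GL (Fin 6) F) : Matrix (Fin 6) (Fin 6) F)
        = Matrix.diagonal d) :
    ∃ (σ : Equiv.Perm (Fin 6)) (a : Fin 6 → F), (∀ i, a i ≠ 0) ∧
      (X : Matrix (Fin 6) (Fin 6) F)
        = Matrix.diagonal a * Matrix.of (fun i j => if σ i = j then (1 : F) else 0) := by
  have h2 : (2 : F) ≠ 0 := Ring.two_ne_zero hF
  set M : Matrix (Fin 6) (Fin 6) F := (X : Matrix (Fin 6) (Fin 6) F) with hM
  set N : Matrix (Fin 6) (Fin 6) F := ((X⁻¹ : GL (Fin 6) F) : Matrix (Fin 6) (Fin 6) F) with hN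
  have hNM : N * M = 1 := X.inv_mul
  have hMN : M * N = 1 := X.mul_inv
  -- symmetric version of hX and multiply back
  have key : ∀ i j : Fin 6, i ≠ j → ∃ d : Fin 6 → F, (∀ k, d k = 1 ∨ d k = -1) ∧
      M * Matrix.diagonal (fun k => if k = i ∨ k = j then (-1 : F) else 1)
        = Matrix.diagonal d * M := by
    intro i j hij
    have main : ∀ i j : Fin 6, i < j → ∃ d : Fin 6 → F, (∀ k, d k = 1 ∨ d k = -1) ∧
        M * Matrix.diagonal (fun k => if k = i ∨ k = j then (-1 : F) else 1)
          = Matrix.diagonal d * M := by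
      intro i j h
      obtain ⟨d, hd1, hd2⟩ := hX i j h
      refine ⟨d, hd1, ?_⟩
      calc M * Matrix.diagonal (fun k => if k = i ∨ k = j then (-1 : F) else 1)
          = M * Matrix.diagonal (fun k => if k = i ∨ k = j then (-1 : F) else 1) * (N * M) := by
            rw [hNM, mul_one]
        _ = (M * Matrix.diagonal (fun k => if k = i ∨ k = j then (-1 : F) else 1) * N) * M := by
            simp only [mul_assoc]
        _ = Matrix.diagonal d * M := by rw [hd2]
    rcases lt_or_gt_of_ne hij with h | h
    · exact main i j h
    · obtain ⟨d, hd1, hd2⟩ := main j i h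
      refine ⟨d, hd1, ?_⟩
      have : (fun k : Fin 6 => if k = i ∨ k = j then (-1 : F) else 1)
          = (fun k => if k = j ∨ k = i then (-1 : F) else 1) := by
        funext k; simp [or_comm]
      rw [this]; exact hd2
  -- at most one nonzero per row
  have claim : ∀ k l l' : Fin 6, l ≠ l' → M k l ≠ 0 → M k l' = 0 := by
    intro k l l' hll' hMkl
    obtain ⟨j, hjl, hjl'⟩ : ∃ j : Fin 6, j ≠ l ∧ j ≠ l' := by
      have : (({l, l'} : Finset (Fin 6))ᶜ).Nonempty := by
        rw [← Finset.card_pos, Finset.card_compl]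
        have h1 : ({l, l'} : Finset (Fin 6)).card ≤ 2 := by
          apply le_trans (Finset.card_insert_le l {l'}); simp
        simp only [Fintype.card_fin]; omega
      obtain ⟨j, hj⟩ := this
      simp only [Finset.mem_compl, Finset.mem_insert, Finset.mem_singleton, not_or] at hj
      exact ⟨j, hj.1, hj.2⟩
    obtain ⟨d, hd1, hd2⟩ := key l j (Ne.symm hjl)
    have e1 : M k l * (if l = l ∨ l = j then (-1 : F) else 1) = d k * M k l := by
      have := congrFun (congrFun hd2 k) l
      simpa [Matrix.mul_diagonal, Matrix.diagonal_mul] using this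
    have e2 : M k l' * (if l' = l ∨ l' = j then (-1 : F) else 1) = d k * M k l' := by
      have := congrFun (congrFun hd2 k) l'
      simpa [Matrix.mul_diagonal, Matrix.diagonal_mul] using this
    simp only [true_or, if_true, if_pos] at e1
    rw [if_neg (by push_neg; exact ⟨Ne.symm hll', Ne.symm hjl'⟩)] at e2
    have hdk : d k = -1 := by
      have : (d k + 1) * M k l = 0 := by ring_nf; linear_combination -e1
      rcases mul_eq_zero.mp this with h | h
      · exact eq_neg_of_add_eq_zero_left h
      · exact absurd h hMkl
    rw [hdk] at e2
    have : (2 : F) * M k l' = 0 := by linear_combination e2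
    rcases mul_eq_zero.mp this with h | h
    · exact absurd h h2
    · exact h
  -- each row nonzero
  have hrow : ∀ k : Fin 6, ∃ l, M k l ≠ 0 := by
    intro k
    by_contra h
    push_neg at h
    have := congrFun (congrFun hMN k) k
    rw [Matrix.mul_apply] at this
    simp only [h, zero_mul, Finset.sum_const_zero, Matrix.one_apply_eq] at this
    exact one_ne_zero this.symm
  classical
  let c : Fin 6 → Fin 6 := fun k => Classical.choose (hrow k)
  have hc : ∀ k, M k (c k) ≠ 0 := fun k => Classical.choose_spec (hrow k)
  have hMrow : ∀ k l, l ≠ c k → M k l = 0 := fun k l h => claim k (c k) l (Ne.symm h) (hc k)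
  have hsum : ∀ k k', (M * N) k k' = M k (c k) * N (c k) k' := by
    intro k k'
    rw [Matrix.mul_apply]
    apply Finset.sum_eq_single (c k)
    · intro l _ hl
      rw [hMrow k l hl, zero_mul]
    · intro h; exact absurd (Finset.mem_univ _) h
  have hinj : Function.Injective c := by
    intro k k' hkk'
    by_contra hne
    have h1 : M k (c k) * N (c k) k' = 0 := by
      rw [← hsum, hMN, Matrix.one_apply_ne hne]
    have h2 : M k' (c k') * N (c k') k' = 1 := by
      rw [← hsum, hMN, Matrix.one_apply_eq]
    rw [hkk'] at h1
    rcases mul_eq_zero.mp h1 with h | h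
    · rw [← hkk'] at h; exact hc k h
    · rw [h, mul_zero] at h2; exact one_ne_zero h2.symm
  refine ⟨Equiv.ofBijective c (Finite.injective_iff_bijective.mp hinj),
    fun k => M k (c k), fun k => hc k, ?_⟩
  ext k l
  simp only [Matrix.mul_apply, Matrix.diagonal_apply, Matrix.of_apply, Equiv.ofBijective_apply]
  rw [Finset.sum_eq_single k]
  · simp only [if_pos rfl]
    by_cases h : c k = l
    · subst h; simp
    · rw [hMrow k l (fun hh => h hh.symm), if_neg h, mul_zero]
  · intro b _ hb; rw [if_neg (Ne.symm hb), zero_mul]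
  · intro h; exact absurd (Finset.mem_univ _) h
end

section
/- Consider the matrices in GL₄(ℤ): s₁ = [[0,−1,1,−1],[1,−1,1,0],[0,0,1,0],[0,0,0,1]], s₂ = [[−1,1,0,−1],[0,1,0,0],[0,0,1,0],[0,0,0,1]], s₃ = [[0,0,1,−1],[0,1,0,0],[1,0,0,1],[0,0,0,1]], s₄ = [[1,0,−1,1],[0,1,−1,0],[0,0,0,−1],[0,0,1,−1]]. For every matrix M in the subgroup of GL₄(ℤ) generated by {s₁, s₂, s₃, s₄} and for all a, b ∈ ℤ/2ℤ, there exist a′, b′ ∈ ℤ/2ℤ such that the row vector (a, b, a, b) multiplied on the right by the mod-2 reduction of M equals the row vector (a′, b′, a′, b′). -/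
private def Qmat (A : Matrix (Fin 4) (Fin 4) ℤ) : Prop :=
  ∀ a b : ZMod 2, ∃ a' b' : ZMod 2,
    Matrix.vecMul ![a, b, a, b] (A.map (fun n : ℤ => (n : ZMod 2))) = ![a', b', a', b']

private lemma Qmat_mul {A B : Matrix (Fin 4) (Fin 4) ℤ} (hA : Qmat A) (hB : Qmat B) :
    Qmat (A * B) := by
  intro a b
  obtain ⟨a', b', h1⟩ := hA a b
  obtain ⟨a'', b'', h2⟩ := hB a' b'
  refine ⟨a'', b'', ?_⟩
  have hm : (A * B).map (fun n : ℤ => (n : ZMod 2)) =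
      A.map (fun n : ℤ => (n : ZMod 2)) * B.map (fun n : ℤ => (n : ZMod 2)) :=
    Matrix.map_mul (f := Int.castRingHom (ZMod 2))
  rw [hm, ← Matrix.vecMul_vecMul, h1, h2]

/-- For every matrix M in the subgroup of GL₄(ℤ) generated by s₁, s₂, s₃, s₄ (the Weyl
group of the Cartan grading of f₄) and all a, b ∈ ℤ/2ℤ, the row vector (a,b,a,b)
multiplied by the mod-2 reduction of M is again of the form (a′,b′,a′,b′). -/
theorem stmt_14 (s₁ s₂ s₃ s₄ : GL (Fin 4) ℤ)
    (h₁ : (s₁ : Matrix (Fin 4) (Fin 4) ℤ) = !![0,-1,1,-1; 1,-1,1,0; 0,0,1,0; 0,0,0,1])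
    (h₂ : (s₂ : Matrix (Fin 4) (Fin 4) ℤ) = !![-1,1,0,-1; 0,1,0,0; 0,0,1,0; 0,0,0,1])
    (h₃ : (s₃ : Matrix (Fin 4) (Fin 4) ℤ) = !![0,0,1,-1; 0,1,0,0; 1,0,0,1; 0,0,0,1])
    (h₄ : (s₄ : Matrix (Fin 4) (Fin 4) ℤ) = !![1,0,-1,1; 0,1,-1,0; 0,0,0,-1; 0,0,1,-1]) :
    ∀ M ∈ (Subgroup.closure {s₁, s₂, s₃, s₄} : Subgroup (GL (Fin 4) ℤ)),
      ∀ a b : ZMod 2, ∃ a' b' : ZMod 2,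
        Matrix.vecMul ![a, b, a, b]
            (((M : GL (Fin 4) ℤ) : Matrix (Fin 4) (Fin 4) ℤ).map (fun n : ℤ => (n : ZMod 2)))
          = ![a', b', a', b'] := by
  intro M hM
  -- coercions of inverses of the generators
  have hi₁ : ((s₁⁻¹ : GL (Fin 4) ℤ) : Matrix (Fin 4) (Fin 4) ℤ)
      = !![-1,1,0,-1; -1,0,1,-1; 0,0,1,0; 0,0,0,1] := by
    apply Units.inv_eq_of_mul_eq_one_right
    show (s₁ : Matrix (Fin 4) (Fin 4) ℤ) * _ = 1
    rw [h₁]; decide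
  have hi₂ : ((s₂⁻¹ : GL (Fin 4) ℤ) : Matrix (Fin 4) (Fin 4) ℤ)
      = !![-1,1,0,-1; 0,1,0,0; 0,0,1,0; 0,0,0,1] := by
    apply Units.inv_eq_of_mul_eq_one_right
    show (s₂ : Matrix (Fin 4) (Fin 4) ℤ) * _ = 1
    rw [h₂]; decide
  have hi₃ : ((s₃⁻¹ : GL (Fin 4) ℤ) : Matrix (Fin 4) (Fin 4) ℤ)
      = !![0,0,1,-1; 0,1,0,0; 1,0,0,1; 0,0,0,1] := by
    apply Units.inv_eq_of_mul_eq_one_right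
    show (s₃ : Matrix (Fin 4) (Fin 4) ℤ) * _ = 1
    rw [h₃]; decide
  have hi₄ : ((s₄⁻¹ : GL (Fin 4) ℤ) : Matrix (Fin 4) (Fin 4) ℤ)
      = !![1,0,0,1; 0,1,-1,1; 0,0,-1,1; 0,0,-1,0] := by
    apply Units.inv_eq_of_mul_eq_one_right
    show (s₄ : Matrix (Fin 4) (Fin 4) ℤ) * _ = 1
    rw [h₄]; decide
  have key : Qmat (M : Matrix (Fin 4) (Fin 4) ℤ) ∧
      Qmat ((M⁻¹ : GL (Fin 4) ℤ) : Matrix (Fin 4) (Fin 4) ℤ) := by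
    induction hM using Subgroup.closure_induction with
    | mem x hx =>
      rcases hx with h | h | h | h <;> subst h <;> constructor
      · rw [h₁]; unfold Qmat; decide
      · rw [hi₁]; unfold Qmat; decide
      · rw [h₂]; unfold Qmat; decide
      · rw [hi₂]; unfold Qmat; decide
      · rw [h₃]; unfold Qmat; decide
      · rw [hi₃]; unfold Qmat; decide
      · rw [h₄]; unfold Qmat; decide
      · rw [hi₄]; unfold Qmat; decide
    | one =>
      constructor <;>
      · simp only [inv_one, Units.val_one]
        intro a b
        exact ⟨a, b, by simp⟩
    | mul x y hx hy ihx ihy =>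
      constructor
      · have : ((x * y : GL (Fin 4) ℤ) : Matrix (Fin 4) (Fin 4) ℤ)
            = (x : Matrix (Fin 4) (Fin 4) ℤ) * (y : Matrix (Fin 4) (Fin 4) ℤ) := rfl
        rw [this]; exact Qmat_mul ihx.1 ihy.1
      · have : (((x * y)⁻¹ : GL (Fin 4) ℤ) : Matrix (Fin 4) (Fin 4) ℤ)
            = ((y⁻¹ : GL (Fin 4) ℤ) : Matrix (Fin 4) (Fin 4) ℤ)
              * ((x⁻¹ : GL (Fin 4) ℤ) : Matrix (Fin 4) (Fin 4) ℤ) := by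
          rw [mul_inv_rev]; rfl
        rw [this]; exact Qmat_mul ihy.2 ihx.2
    | inv x hx ihx =>
      refine ⟨ihx.2, ?_⟩
      rw [inv_inv]; exact ihx.1
  exact key.1
end
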